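/- Let f : [0,1] → ℝ be continuous. For N ≥ 1 let σ_N(f)_∞ := inf over all partitions of [0,1] into at most N intervals of the global uniform-norm piecewise-constant approximation error. Then f has bounded variation on [0,1] if and only if there exists C > 0 such that σ_N(f)_∞ ≤ C N^{−1} for all N ≥ 1. Quantitatively: if f ∈ BV([0,1]) then σ_N(f)_∞ ≤ (1/2)|f|_{BV} N^{−1}, and conversely if σ_N(f)_∞ ≤ C N^{−1} for all N ≥ 1 then the total variation of f is at most 6C. -/

import Mathlib

open Set

/-- Local piecewise-constant approximation error of `f` on the interval `I`
in the uniform norm: `e_{1,I}(f)_∞ = inf_c sup_{x ∈ I} |f x - c|`. -/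
noncomputable def locErr (f : ℝ → ℝ) (I : Set ℝ) : ℝ :=
  ⨅ c : ℝ, ⨆ x : I, |f x.1 - c|

/-- `σ_N(f)_∞`: infimum, over all partitions of `[0,1]` into at most `N` intervals
(given by points `0 = a 0 ≤ a 1 ≤ … ≤ a M = 1`, `M ≤ N`), of the global
uniform-norm piecewise-constant approximation error (the max of local errors). -/
noncomputable def adaptErr (f : ℝ → ℝ) (N : ℕ) : ℝ :=
  sInf { e : ℝ | ∃ M : ℕ, 1 ≤ M ∧ M ≤ N ∧ ∃ a : ℕ → ℝ,
    a 0 = 0 ∧ a M = 1 ∧ (∀ k < M, a k ≤ a (k + 1)) ∧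
    e = ⨆ k : Fin M, locErr f (Set.Icc (a k.1) (a (k.1 + 1))) }

namespace Stmt4Aux

/-! ### Generic helpers -/

lemma habs (x y : ℝ) : |x - y| ≤ |x| + |y| := by
  rw [sub_eq_add_neg]
  exact (abs_add_le x (-y)).trans (by rw [abs_neg])

lemma locErr_nonneg (f : ℝ → ℝ) (I : Set ℝ) : 0 ≤ locErr f I :=
  Real.iInf_nonneg fun _ => Real.iSup_nonneg fun _ => abs_nonneg _

lemma locErr_le (f : ℝ → ℝ) (I : Set ℝ) (c v : ℝ) (hv : 0 ≤ v)
    (h : ∀ x ∈ I, |f x - c| ≤ v) : locErr f I ≤ v :=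
  ciInf_le_of_le ⟨0, by rintro z ⟨c', rfl⟩; exact Real.iSup_nonneg fun _ => abs_nonneg _⟩ c
    (Real.iSup_le (fun x => h x x.2) hv)

lemma chain_mono {a : ℕ → ℝ} {M : ℕ} (h : ∀ k < M, a k ≤ a (k + 1)) :
    ∀ {i j : ℕ}, i ≤ j → j ≤ M → a i ≤ a j := by
  intro i j hij hjM
  induction j, hij using Nat.le_induction with
  | base => exact le_rfl
  | succ n hn ih => exact (ih (by omega)).trans (h n (by omega))

/-- The partition set defining `adaptErr`. -/
def PartSet (f : ℝ → ℝ) (N : ℕ) : Set ℝ :=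
  { e : ℝ | ∃ M : ℕ, 1 ≤ M ∧ M ≤ N ∧ ∃ a : ℕ → ℝ,
    a 0 = 0 ∧ a M = 1 ∧ (∀ k < M, a k ≤ a (k + 1)) ∧
    e = ⨆ k : Fin M, locErr f (Set.Icc (a k.1) (a (k.1 + 1))) }

lemma adaptErr_eq (f : ℝ → ℝ) (N : ℕ) : adaptErr f N = sInf (PartSet f N) := rfl

lemma partSet_nonneg (f : ℝ → ℝ) (N : ℕ) {e : ℝ} (he : e ∈ PartSet f N) : 0 ≤ e := by
  obtain ⟨M, hM1, hMN, a, h0, h1, hm, rfl⟩ := he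
  exact (locErr_nonneg f _).trans
    (le_ciSup (f := fun k : Fin M => locErr f (Set.Icc (a k.1) (a (k.1 + 1))))
      (Set.Finite.bddAbove (Set.finite_range _)) ⟨0, hM1⟩)

lemma partSet_bddBelow (f : ℝ → ℝ) (N : ℕ) : BddBelow (PartSet f N) :=
  ⟨0, fun _ he => partSet_nonneg f N he⟩

lemma partSet_nonempty (f : ℝ → ℝ) (N : ℕ) (hN : 1 ≤ N) : (PartSet f N).Nonempty := by
  refine ⟨_, 1, le_rfl, hN, fun k => if k = 0 then 0 else 1, by norm_num, by norm_num, ?_, rfl⟩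
  intro k hk
  have : k = 0 := by omega
  subst this
  norm_num

/-! ### Variation helpers -/

lemma evar_add (f : ℝ → ℝ) {a b c : ℝ} (hab : a ≤ b) (hbc : b ≤ c) :
    eVariationOn f (Icc a b) + eVariationOn f (Icc b c) = eVariationOn f (Icc a c) := by
  simpa using eVariationOn.Icc_add_Icc f (s := univ) hab hbc (mem_univ b)

lemma mvar_add (f : ℝ → ℝ) {a b c : ℝ} (hab : a ≤ b) (hbc : b ≤ c)
    (hfin : eVariationOn f (Icc a c) ≠ ⊤) :
    (eVariationOn f (Icc a b)).toReal + (eVariationOn f (Icc b c)).toReal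
      = (eVariationOn f (Icc a c)).toReal := by
  have h := evar_add f hab hbc
  have h1 : eVariationOn f (Icc a b) ≠ ⊤ :=
    ne_top_of_le_ne_top hfin (eVariationOn.mono f (Icc_subset_Icc le_rfl hbc))
  have h2 : eVariationOn f (Icc b c) ≠ ⊤ :=
    ne_top_of_le_ne_top hfin (eVariationOn.mono f (Icc_subset_Icc hab le_rfl))
  rw [← h, ENNReal.toReal_add h1 h2]

lemma edist_sum_eq (f : ℝ → ℝ) (u : ℕ → ℝ) (n : ℕ) :
    ∑ i ∈ Finset.range n, edist (f (u (i + 1))) (f (u i))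
      = ENNReal.ofReal (∑ i ∈ Finset.range n, |f (u (i + 1)) - f (u i)|) := by
  rw [ENNReal.ofReal_sum_of_nonneg fun i _ => abs_nonneg _]
  exact Finset.sum_congr rfl fun i _ => by rw [edist_dist, Real.dist_eq]

lemma sum_dist_le (f : ℝ → ℝ) {s : Set ℝ} (hfin : eVariationOn f s ≠ ⊤)
    (n : ℕ) {u : ℕ → ℝ} (hu : Monotone u) (us : ∀ i, u i ∈ s) :
    ∑ i ∈ Finset.range n, |f (u (i + 1)) - f (u i)| ≤ (eVariationOn f s).toReal := by
  have h := eVariationOn.sum_le (f := f) (n := n) hu us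
  rw [edist_sum_eq] at h
  have h2 := ENNReal.toReal_mono hfin h
  rwa [ENNReal.toReal_ofReal (Finset.sum_nonneg fun i _ => abs_nonneg _)] at h2

lemma exists_partition (f : ℝ → ℝ) {s : Set ℝ} (hs : s.Nonempty)
    (hfin : eVariationOn f s ≠ ⊤) {ε : ℝ} (hε : 0 < ε) :
    ∃ n : ℕ, ∃ u : ℕ → ℝ, Monotone u ∧ (∀ i, u i ∈ s) ∧
      (eVariationOn f s).toReal - ε < ∑ i ∈ Finset.range n, |f (u (i + 1)) - f (u i)| := by
  rcases lt_or_ge ((eVariationOn f s).toReal - ε) 0 with hlt | hle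
  · obtain ⟨z, hz⟩ := hs
    exact ⟨0, fun _ => z, monotone_const, fun _ => hz, by simpa using hlt⟩
  · have h2 : ENNReal.ofReal ((eVariationOn f s).toReal - ε) < eVariationOn f s := by
      conv_rhs => rw [← ENNReal.ofReal_toReal hfin]
      exact (ENNReal.ofReal_lt_ofReal_iff (by linarith)).2 (by linarith)
    unfold eVariationOn at h2
    rw [lt_iSup_iff] at h2
    obtain ⟨⟨n, u, hu, hus⟩, hlt2⟩ := h2
    refine ⟨n, u, hu, hus, ?_⟩
    rw [edist_sum_eq] at hlt2
    exact (ENNReal.ofReal_lt_ofReal_iff_of_nonneg hle).1 hlt2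

/-! ### Continuity of the variation function -/

lemma right_small {f : ℝ → ℝ} {p q : ℝ} (hf : ContinuousOn f (Icc p q))
    (hfin : eVariationOn f (Icc p q) ≠ ⊤) {x : ℝ} (hx : x ∈ Ico p q)
    {δ : ℝ} (hδ : 0 < δ) :
    ∃ y, x < y ∧ y ≤ q ∧ (eVariationOn f (Icc x y)).toReal < δ := by
  classical
  by_contra hcon
  push_neg at hcon
  obtain ⟨hpx, hxq⟩ := hx
  have hcx : ContinuousWithinAt f (Icc p q) x := hf x ⟨hpx, le_of_lt hxq⟩
  obtain ⟨η, hη, hball⟩ := Metric.continuousWithinAt_iff.1 hcx (δ / 4) (by linarith)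
  set y := min (x + η / 2) q with hy
  have hxy : x < y := lt_min (by linarith) hxq
  have hyq : y ≤ q := min_le_right _ _
  have hsub : Icc x y ⊆ Icc p q := Icc_subset_Icc hpx hyq
  have hfinxy : eVariationOn f (Icc x y) ≠ ⊤ :=
    ne_top_of_le_ne_top hfin (eVariationOn.mono f hsub)
  have hnear : ∀ t ∈ Icc x y, |f t - f x| < δ / 4 := by
    intro t ht
    have h1 : t ∈ Icc p q := hsub ht
    have h2 : dist t x < η := by
      rw [Real.dist_eq, abs_of_nonneg (by linarith [ht.1])]
      have h3 : t ≤ x + η / 2 := le_trans ht.2 (min_le_left _ _)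
      linarith
    have := hball h1 h2
    rwa [Real.dist_eq] at this
  have hm0 : δ ≤ (eVariationOn f (Icc x y)).toReal := hcon y hxy hyq
  obtain ⟨n, u, hu, hus, hsum⟩ :=
    exists_partition f (s := Icc x y) ⟨x, left_mem_Icc.2 hxy.le⟩ hfinxy
      (show (0:ℝ) < δ / 4 by linarith)
  -- prepend `x` at the start of the partition
  set v : ℕ → ℝ := fun i => if i = 0 then x else u (i - 1) with hvdef
  have hvsucc : ∀ i, v (i + 1) = u i := fun i => by simp [hvdef]
  have hv0 : v 0 = x := by simp [hvdef]
  have hvs : ∀ i, v i ∈ Icc x y := by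
    intro i
    cases i with
    | zero => rw [hv0]; exact left_mem_Icc.2 hxy.le
    | succ k => rw [hvsucc]; exact hus k
  have hvmono : Monotone v := by
    apply monotone_nat_of_le_succ
    intro i
    cases i with
    | zero => rw [hv0, hvsucc]; exact (hus 0).1
    | succ k => rw [hvsucc, hvsucc]; exact hu (Nat.le_succ k)
  have hsumv : (eVariationOn f (Icc x y)).toReal - δ / 4
      < ∑ i ∈ Finset.range (n + 1), |f (v (i + 1)) - f (v i)| := by
    refine hsum.trans_le ?_
    rw [Finset.sum_range_succ' (fun i => |f (v (i + 1)) - f (v i)|) n]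
    have h1 : ∑ i ∈ Finset.range n, |f (u (i + 1)) - f (u i)|
        = ∑ i ∈ Finset.range n, |f (v (i + 1 + 1)) - f (v (i + 1))| :=
      Finset.sum_congr rfl fun i _ => by rw [hvsucc, hvsucc]
    rw [h1]
    exact le_add_of_nonneg_right (abs_nonneg _)
  by_cases hall : ∀ i ≤ n + 1, v i = x
  · have hz : ∑ i ∈ Finset.range (n + 1), |f (v (i + 1)) - f (v i)| = 0 := by
      apply Finset.sum_eq_zero
      intro i hi
      rw [Finset.mem_range] at hi
      rw [hall i (by omega), hall (i + 1) (by omega), sub_self, abs_zero]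
    rw [hz] at hsumv
    linarith
  · push_neg at hall
    obtain ⟨i0, hi0n, hi0⟩ := hall
    have hP0 : x < v i0 := lt_of_le_of_ne (hvs i0).1 (Ne.symm hi0)
    have hex : ∃ i, x < v i := ⟨i0, hP0⟩
    set j := Nat.find hex with hjdef
    have hPj : x < v j := Nat.find_spec hex
    have hjle : j ≤ n + 1 := (Nat.find_le hP0).trans hi0n
    have hj1 : 1 ≤ j := by
      by_contra hj0
      have : j = 0 := by omega
      rw [this, hv0] at hPj
      exact lt_irrefl x hPj
    have hvlt : ∀ i < j, v i = x := fun i hi =>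
      le_antisymm (not_lt.1 (Nat.find_min hex hi)) (hvs i).1
    have hsplit : ∑ i ∈ Finset.range (n + 1), |f (v (i + 1)) - f (v i)|
        = ∑ i ∈ Finset.range j, |f (v (i + 1)) - f (v i)|
          + ∑ i ∈ Finset.Ico j (n + 1), |f (v (i + 1)) - f (v i)| :=
      (Finset.sum_range_add_sum_Ico _ hjle).symm
    have hsplit1 : ∑ i ∈ Finset.range j, |f (v (i + 1)) - f (v i)|
        = ∑ i ∈ Finset.range (j - 1), |f (v (i + 1)) - f (v i)|
          + |f (v ((j - 1) + 1)) - f (v (j - 1))| := by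
      conv_lhs => rw [show j = (j - 1) + 1 by omega]
      rw [Finset.sum_range_succ]
    have hz1 : ∑ i ∈ Finset.range (j - 1), |f (v (i + 1)) - f (v i)| = 0 :=
      Finset.sum_eq_zero fun i hi => by
        rw [Finset.mem_range] at hi
        rw [hvlt (i + 1) (by omega), hvlt i (by omega), sub_self, abs_zero]
    have hterm : |f (v ((j - 1) + 1)) - f (v (j - 1))| < δ / 4 := by
      rw [show (j - 1) + 1 = j by omega, hvlt (j - 1) (by omega)]
      exact hnear (v j) (hvs j)
    have hfin2 : eVariationOn f (Icc (v j) y) ≠ ⊤ :=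
      ne_top_of_le_ne_top hfinxy (eVariationOn.mono f (Icc_subset_Icc (hvs j).1 le_rfl))
    have htail : ∑ i ∈ Finset.Ico j (n + 1), |f (v (i + 1)) - f (v i)|
        ≤ (eVariationOn f (Icc (v j) y)).toReal := by
      rw [Finset.sum_Ico_eq_sum_range]
      exact sum_dist_le f hfin2 (n + 1 - j) (u := fun i => v (j + i))
        (fun i i' h => hvmono (by omega))
        (fun i => ⟨hvmono (Nat.le_add_right j i), (hvs (j + i)).2⟩)
    have hub : (eVariationOn f (Icc x y)).toReal - δ / 4
        < δ / 4 + (eVariationOn f (Icc (v j) y)).toReal := by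
      rw [hsplit, hsplit1, hz1, zero_add] at hsumv
      linarith
    have hadd : (eVariationOn f (Icc x (v j))).toReal
        + (eVariationOn f (Icc (v j) y)).toReal = (eVariationOn f (Icc x y)).toReal :=
      mvar_add f (hvs j).1 (hvs j).2 hfinxy
    have hcon2 : δ ≤ (eVariationOn f (Icc x (v j))).toReal :=
      hcon (v j) hPj ((hvs j).2.trans hyq)
    linarith

lemma left_small {f : ℝ → ℝ} {p q : ℝ} (hf : ContinuousOn f (Icc p q))
    (hfin : eVariationOn f (Icc p q) ≠ ⊤) {x : ℝ} (hx : x ∈ Ioc p q)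
    {δ : ℝ} (hδ : 0 < δ) :
    ∃ y, p ≤ y ∧ y < x ∧ (eVariationOn f (Icc y x)).toReal < δ := by
  set g : ℝ → ℝ := f ∘ (fun t : ℝ => -t) with hgdef
  have hneg : ∀ a b : ℝ, eVariationOn g (Icc a b) = eVariationOn f (Icc (-b) (-a)) := by
    intro a b
    have h1 := eVariationOn.comp_eq_of_antitoneOn f (fun t : ℝ => -t) (t := Icc a b)
      (fun u _ v _ huv => neg_le_neg huv)
    rw [hgdef, h1]
    congr 1
    ext z
    simp only [Set.mem_image, Set.mem_Icc]
    constructor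
    · rintro ⟨w, ⟨h1', h2'⟩, rfl⟩
      constructor <;> linarith
    · rintro ⟨h1', h2'⟩
      exact ⟨-z, ⟨by linarith, by linarith⟩, by ring⟩
  have hpq : p ≤ q := (hx.1.trans_le hx.2).le
  have hgc : ContinuousOn g (Icc (-q) (-p)) := by
    apply hf.comp continuous_neg.continuousOn
    intro t ht
    simp only [Set.mem_Icc] at ht ⊢
    constructor <;> linarith [ht.1, ht.2]
  have hgfin : eVariationOn g (Icc (-q) (-p)) ≠ ⊤ := by
    rw [hneg, neg_neg, neg_neg]
    exact hfin
  have hmem : -x ∈ Ico (-q) (-p) := ⟨by linarith [hx.2], by linarith [hx.1]⟩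
  obtain ⟨y', hy1, hy2, hy3⟩ := right_small hgc hgfin hmem hδ
  refine ⟨-y', by linarith, by linarith, ?_⟩
  rw [hneg, neg_neg] at hy3
  exact hy3

lemma contV {f : ℝ → ℝ} (hf : ContinuousOn f (Icc 0 1))
    (hfin : eVariationOn f (Icc 0 1) ≠ ⊤) :
    ContinuousOn (fun t => (eVariationOn f (Icc 0 t)).toReal) (Icc (0:ℝ) 1) := by
  intro x hx
  rw [Metric.continuousWithinAt_iff]
  intro ε hε
  have hfinx : eVariationOn f (Icc 0 x) ≠ ⊤ :=
    ne_top_of_le_ne_top hfin (eVariationOn.mono f (Icc_subset_Icc le_rfl hx.2))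
  obtain ⟨yr, hyr1, hyr2⟩ : ∃ yr, x < yr ∧ ∀ t ∈ Icc (0:ℝ) 1, x ≤ t → t ≤ yr →
      (eVariationOn f (Icc 0 t)).toReal - (eVariationOn f (Icc 0 x)).toReal < ε := by
    rcases lt_or_ge x 1 with h1 | h1
    · obtain ⟨y, hy1, hy2, hy3⟩ := right_small hf hfin ⟨hx.1, h1⟩ hε
      refine ⟨y, hy1, fun t ht hxt hty => ?_⟩
      have hadd := mvar_add f hx.1 hxt
        (ne_top_of_le_ne_top hfin (eVariationOn.mono f (Icc_subset_Icc le_rfl ht.2)))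
      have hle : (eVariationOn f (Icc x t)).toReal ≤ (eVariationOn f (Icc x y)).toReal :=
        ENNReal.toReal_mono
          (ne_top_of_le_ne_top hfin (eVariationOn.mono f (Icc_subset_Icc hx.1 hy2)))
          (eVariationOn.mono f (Icc_subset_Icc le_rfl hty))
      linarith
    · refine ⟨x + 1, by linarith, fun t ht hxt hty => ?_⟩
      have : t = x := le_antisymm (ht.2.trans h1) hxt
      rw [this]
      simpa using hε
  obtain ⟨yl, hyl1, hyl2⟩ : ∃ yl, yl < x ∧ ∀ t ∈ Icc (0:ℝ) 1, yl ≤ t → t ≤ x →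
      (eVariationOn f (Icc 0 x)).toReal - (eVariationOn f (Icc 0 t)).toReal < ε := by
    rcases lt_or_ge 0 x with h1 | h1
    · obtain ⟨y, hy1, hy2, hy3⟩ := left_small hf hfin ⟨h1, hx.2⟩ hε
      refine ⟨y, hy2, fun t ht hyt htx => ?_⟩
      have hadd := mvar_add f ht.1 htx hfinx
      have hle : (eVariationOn f (Icc t x)).toReal ≤ (eVariationOn f (Icc y x)).toReal :=
        ENNReal.toReal_mono
          (ne_top_of_le_ne_top hfin (eVariationOn.mono f (Icc_subset_Icc hy1 hx.2)))
          (eVariationOn.mono f (Icc_subset_Icc hyt le_rfl))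
      linarith
    · refine ⟨x - 1, by linarith, fun t ht hyt htx => ?_⟩
      have : t = x := le_antisymm htx (h1.trans ht.1)
      rw [this]
      simpa using hε
  refine ⟨min (yr - x) (x - yl), lt_min (by linarith) (by linarith), ?_⟩
  intro t ht hdist
  have h1 : t - x < yr - x :=
    lt_of_le_of_lt (le_abs_self _) (lt_of_lt_of_le (by rwa [Real.dist_eq] at hdist)
      (min_le_left _ _))
  have h2 : x - t < x - yl := by
    have : |x - t| < x - yl := lt_of_lt_of_le
      (by rw [abs_sub_comm]; rwa [Real.dist_eq] at hdist) (min_le_right _ _)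
    exact lt_of_le_of_lt (le_abs_self _) this
  rw [Real.dist_eq, abs_sub_lt_iff]
  have hfint : eVariationOn f (Icc 0 t) ≠ ⊤ :=
    ne_top_of_le_ne_top hfin (eVariationOn.mono f (Icc_subset_Icc le_rfl ht.2))
  constructor
  · rcases le_total x t with h | h
    · exact hyr2 t ht h (by linarith)
    · have hmono : (eVariationOn f (Icc 0 t)).toReal ≤ (eVariationOn f (Icc 0 x)).toReal :=
        ENNReal.toReal_mono hfinx (eVariationOn.mono f (Icc_subset_Icc le_rfl h))
      linarith
  · rcases le_total x t with h | h
    · have hmono : (eVariationOn f (Icc 0 x)).toReal ≤ (eVariationOn f (Icc 0 t)).toReal :=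
        ENNReal.toReal_mono hfint (eVariationOn.mono f (Icc_subset_Icc le_rfl h))
      linarith
    · exact hyl2 t ht (by linarith) h

/-! ### The direct estimate (part 2) -/

lemma part2 {f : ℝ → ℝ} (hf : ContinuousOn f (Icc 0 1))
    (hbv : BoundedVariationOn f (Icc 0 1)) (N : ℕ) (hN : 1 ≤ N) :
    adaptErr f N ≤ ((1 / 2) * (eVariationOn f (Icc 0 1)).toReal) / N := by
  classical
  have hfin : eVariationOn f (Icc 0 1) ≠ ⊤ := hbv
  have hNR : (0:ℝ) < N := by exact_mod_cast hN
  have hNne : (N:ℝ) ≠ 0 := ne_of_gt hNR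
  set Var := (eVariationOn f (Icc 0 1)).toReal with hVardef
  have hVnn : 0 ≤ Var := ENNReal.toReal_nonneg
  set V : ℝ → ℝ := fun t => (eVariationOn f (Icc 0 t)).toReal with hVdef
  have hVcont : ContinuousOn V (Icc 0 1) := contV hf hfin
  have hV0 : V 0 = 0 := by
    simp only [hVdef, Set.Icc_self]
    rw [eVariationOn.subsingleton f subsingleton_singleton]
    simp
  have hV1 : V 1 = Var := rfl
  have hdivnn : 0 ≤ Var / N := div_nonneg hVnn hNR.le
  -- the auxiliary globally continuous variation function
  set W : ℝ → ℝ := fun t => V (max 0 (min t 1)) with hWdef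
  have hWcont : Continuous W := by
    apply hVcont.comp_continuous
    · exact continuous_const.max (continuous_id.min continuous_const)
    · intro t
      exact ⟨le_max_left _ _, max_le zero_le_one (min_le_right _ _)⟩
  have hWV : ∀ x ∈ Icc (0:ℝ) 1, W x = V x := by
    intro x hx
    simp only [hWdef]
    rw [min_eq_left hx.2, max_eq_right hx.1]
  -- the partition points
  set aS : ℕ → Set ℝ := fun k => Icc (0:ℝ) 1 ∩ W ⁻¹' {(k:ℝ) * (Var / N)} with haSdef
  have haSclosed : ∀ k, IsClosed (aS k) :=
    fun k => isClosed_Icc.inter (isClosed_singleton.preimage hWcont)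
  have haSbdd : ∀ k, BddBelow (aS k) := fun k => ⟨0, fun z hz => hz.1.1⟩
  have hval_range : ∀ k : ℕ, k ≤ N → (k:ℝ) * (Var / N) ∈ Icc (V 0) (V 1) := by
    intro k hk
    rw [hV0, hV1]
    constructor
    · exact mul_nonneg (Nat.cast_nonneg k) hdivnn
    · calc (k:ℝ) * (Var / N) ≤ (N:ℝ) * (Var / N) :=
            mul_le_mul_of_nonneg_right (by exact_mod_cast hk) hdivnn
        _ = Var := by rw [mul_comm, div_mul_cancel₀ Var hNne]
  have haSne : ∀ k : ℕ, k ≤ N → (aS k).Nonempty := by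
    intro k hk
    obtain ⟨x, hx, hVx⟩ := intermediate_value_Icc zero_le_one hVcont (hval_range k hk)
    exact ⟨x, hx, by rw [Set.mem_preimage, Set.mem_singleton_iff, hWV x hx, hVx]⟩
  set a : ℕ → ℝ := fun k => if N ≤ k then 1 else sInf (aS k) with hadef
  have ha_lt : ∀ k, k < N → a k ∈ aS k := by
    intro k hk
    have : a k = sInf (aS k) := if_neg (by omega)
    rw [this]
    exact (haSclosed k).csInf_mem (haSne k hk.le) (haSbdd k)
  have ha_memIcc : ∀ k, k ≤ N → a k ∈ Icc (0:ℝ) 1 := by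
    intro k hk
    rcases lt_or_ge k N with h | h
    · exact (ha_lt k h).1
    · have : a k = 1 := if_pos h
      rw [this]
      exact ⟨zero_le_one, le_rfl⟩
  have hVa : ∀ k, k ≤ N → V (a k) = (k:ℝ) * (Var / N) := by
    intro k hk
    rcases lt_or_ge k N with h | h
    · have h1 := (ha_lt k h).2
      rw [Set.mem_preimage, Set.mem_singleton_iff] at h1
      rw [← hWV (a k) (ha_lt k h).1, h1]
    · have hkN : k = N := le_antisymm hk h
      subst hkN
      have h1 : a k = 1 := if_pos le_rfl
      rw [h1, hV1]
      rw [mul_comm, div_mul_cancel₀ Var hNne]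
  have hmono : ∀ k, k < N → a k ≤ a (k + 1) := by
    intro k hk
    rcases lt_or_ge (k + 1) N with h | h
    · -- both are infima; find a point of `aS k` below `a (k+1)`
      have hk1 : a (k + 1) ∈ aS (k + 1) := ha_lt (k + 1) h
      have hk1I : a (k + 1) ∈ Icc (0:ℝ) 1 := hk1.1
      have hsub : Icc (0:ℝ) (a (k + 1)) ⊆ Icc 0 1 := Icc_subset_Icc le_rfl hk1I.2
      have hivt := intermediate_value_Icc hk1I.1 (hVcont.mono hsub)
      have hmemr : (k:ℝ) * (Var / N) ∈ Icc (V 0) (V (a (k + 1))) := by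
        rw [hV0, hVa (k + 1) h.le]
        constructor
        · exact mul_nonneg (Nat.cast_nonneg k) hdivnn
        · apply mul_le_mul_of_nonneg_right _ hdivnn
          exact_mod_cast Nat.le_succ k
      obtain ⟨x, hxm, hVx⟩ := hivt hmemr
      have hxS : x ∈ aS k := by
        refine ⟨⟨hxm.1, hxm.2.trans hk1I.2⟩, ?_⟩
        rw [Set.mem_preimage, Set.mem_singleton_iff, hWV x ⟨hxm.1, hxm.2.trans hk1I.2⟩, hVx]
      have h1 : a k = sInf (aS k) := if_neg (by omega)
      rw [h1]
      exact (csInf_le (haSbdd k) hxS).trans hxm.2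
    · have h1 : a (k + 1) = 1 := if_pos h
      rw [h1]
      exact (ha_memIcc k hk.le).2
  have ha0 : a 0 = 0 := by
    have h1 : a 0 = sInf (aS 0) := if_neg (by omega)
    have h0mem : (0:ℝ) ∈ aS 0 := by
      refine ⟨⟨le_rfl, zero_le_one⟩, ?_⟩
      rw [Set.mem_preimage, Set.mem_singleton_iff, hWV 0 ⟨le_rfl, zero_le_one⟩, hV0]
      simp
    have h2 : sInf (aS 0) ≤ 0 := csInf_le (haSbdd 0) h0mem
    have h3 : (0:ℝ) ≤ sInf (aS 0) := le_csInf ⟨0, h0mem⟩ fun z hz => hz.1.1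
    rw [h1]
    linarith
  have haN : a N = 1 := if_pos le_rfl
  -- variation of each piece
  have hpiece : ∀ k, k < N →
      (eVariationOn f (Icc (a k) (a (k + 1)))).toReal = Var / N := by
    intro k hk
    have hfin1 : eVariationOn f (Icc 0 (a (k + 1))) ≠ ⊤ :=
      ne_top_of_le_ne_top hfin
        (eVariationOn.mono f (Icc_subset_Icc le_rfl (ha_memIcc (k + 1) hk).2))
    have hadd := mvar_add f (ha_memIcc k hk.le).1 (hmono k hk) hfin1
    have e1 : V (a k) = (k:ℝ) * (Var / N) := hVa k hk.le
    have e2 : V (a (k + 1)) = ((k:ℝ) + 1) * (Var / N) := by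
      rw [hVa (k + 1) hk]
      push_cast
      ring
    have e3 : (eVariationOn f (Icc 0 (a k))).toReal = V (a k) := rfl
    have e4 : (eVariationOn f (Icc 0 (a (k + 1)))).toReal = V (a (k + 1)) := rfl
    rw [e3, e4, e1, e2] at hadd
    linarith [hadd]
  -- bound the local error on each piece
  have hloc : ∀ k : Fin N, locErr f (Icc (a k.1) (a (k.1 + 1))) ≤ (1 / 2) * (Var / N) := by
    intro k
    have hk := k.2
    have hab : a k.1 ≤ a (k.1 + 1) := hmono k.1 hk
    have hIsub : Icc (a k.1) (a (k.1 + 1)) ⊆ Icc 0 1 :=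
      Icc_subset_Icc (ha_memIcc k.1 hk.le).1 (ha_memIcc (k.1 + 1) hk).2
    have hfI : ContinuousOn f (Icc (a k.1) (a (k.1 + 1))) := hf.mono hIsub
    have hK : IsCompact (f '' Icc (a k.1) (a (k.1 + 1))) :=
      isCompact_Icc.image_of_continuousOn hfI
    have hne : (f '' Icc (a k.1) (a (k.1 + 1))).Nonempty :=
      (nonempty_Icc.2 hab).image f
    obtain ⟨pM, hpM, hfM⟩ := hK.sSup_mem hne
    obtain ⟨pm, hpm, hfm⟩ := hK.sInf_mem hne
    have hfinI : eVariationOn f (Icc (a k.1) (a (k.1 + 1))) ≠ ⊤ :=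
      ne_top_of_le_ne_top hfin (eVariationOn.mono f hIsub)
    have hdistle : dist (f pM) (f pm) ≤ (eVariationOn f (Icc (a k.1) (a (k.1 + 1)))).toReal := by
      have h1 := ENNReal.toReal_mono hfinI (eVariationOn.edist_le f hpM hpm)
      rwa [edist_dist, ENNReal.toReal_ofReal dist_nonneg] at h1
    have hMm : sSup (f '' Icc (a k.1) (a (k.1 + 1))) - sInf (f '' Icc (a k.1) (a (k.1 + 1)))
        ≤ Var / N := by
      rw [← hfM, ← hfm]
      calc f pM - f pm ≤ |f pM - f pm| := le_abs_self _
        _ = dist (f pM) (f pm) := (Real.dist_eq _ _).symm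
        _ ≤ _ := hdistle
        _ = Var / N := hpiece k.1 hk
    set M0 := sSup (f '' Icc (a k.1) (a (k.1 + 1))) with hM0def
    set m0 := sInf (f '' Icc (a k.1) (a (k.1 + 1))) with hm0def
    apply locErr_le f _ ((m0 + M0) / 2) _ (by positivity)
    intro x hx
    have hxM : f x ≤ M0 := le_csSup hK.bddAbove (Set.mem_image_of_mem f hx)
    have hxm : m0 ≤ f x := csInf_le hK.bddBelow (Set.mem_image_of_mem f hx)
    rw [abs_le]
    constructor <;> [linarith; linarith]
  -- conclude
  rw [adaptErr_eq]
  have hmem : (⨆ k : Fin N, locErr f (Icc (a k.1) (a (k.1 + 1)))) ∈ PartSet f N :=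
    ⟨N, hN, le_rfl, a, ha0, haN, hmono, rfl⟩
  refine (csInf_le (partSet_bddBelow f N) hmem).trans ?_
  have : Nonempty (Fin N) := ⟨⟨0, hN⟩⟩
  exact (ciSup_le hloc).trans (le_of_eq (by ring))

/-! ### The inverse estimate (part 3) -/

lemma part3 {f : ℝ → ℝ} (hf : ContinuousOn f (Icc 0 1)) (C : ℝ) (hC : 0 < C)
    (h : ∀ N : ℕ, 1 ≤ N → adaptErr f N ≤ C / N) :
    eVariationOn f (Icc 0 1) ≤ ENNReal.ofReal (6 * C) := by
  classical
  obtain ⟨D, hD⟩ := isCompact_Icc.exists_bound_of_continuousOn hf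
  unfold eVariationOn
  refine iSup_le ?_
  rintro ⟨n, u, hu, hus⟩
  rw [edist_sum_eq]
  refine ENNReal.ofReal_le_ofReal ?_
  refine le_of_forall_pos_le_add ?_
  intro ε hε
  obtain ⟨N, hNgt⟩ := exists_nat_gt (max 1 (6 * C * n / ε))
  have hN1 : 1 ≤ N := by
    have h1 : (1:ℝ) < N := (le_max_left _ _).trans_lt hNgt
    exact_mod_cast h1.le
  have hNR : (0:ℝ) < N := by exact_mod_cast hN1
  have hNne : (N:ℝ) ≠ 0 := ne_of_gt hNR
  have hCN : 0 < C / N := div_pos hC hNR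
  -- extract a near-optimal partition
  have hinf : sInf (PartSet f N) < C / N + C / N := by
    rw [← adaptErr_eq]
    exact lt_of_le_of_lt (h N hN1) (by linarith)
  obtain ⟨e, heMem, heLt⟩ := exists_lt_of_csInf_lt (partSet_nonempty f N hN1) hinf
  obtain ⟨M, hM1, hMN, a, ha0, haM, hamono, hee⟩ := heMem
  set B := 3 * C / N with hBdef
  have hB : 0 < B := by positivity
  have haIcc : ∀ k, k ≤ M → a k ∈ Icc (0:ℝ) 1 := by
    intro k hk
    constructor
    · have := chain_mono hamono (Nat.zero_le k) hk
      rwa [ha0] at this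
    · have := chain_mono hamono hk le_rfl
      rwa [haM] at this
  -- the local errors are at most e < 2C/N < B, so we can choose good constants
  have hlocB : ∀ k : Fin M, locErr f (Icc (a k.1) (a (k.1 + 1))) < B := by
    intro k
    have h1 : locErr f (Icc (a k.1) (a (k.1 + 1))) ≤ e := by
      rw [hee]
      exact le_ciSup (f := fun k : Fin M => locErr f (Set.Icc (a k.1) (a (k.1 + 1))))
        (Set.Finite.bddAbove (Set.finite_range _)) k
    have h2 : e < B := by
      have h3 : (3:ℝ) * C / N = 3 * (C / N) := by ring
      rw [hBdef, h3]
      linarith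
    linarith
  have hchoice : ∀ k : Fin M, ∃ c : ℝ,
      (⨆ x : (Icc (a k.1) (a (k.1 + 1))), |f x.1 - c|) < B := by
    intro k
    have h1 : (⨅ c : ℝ, ⨆ x : (Icc (a k.1) (a (k.1 + 1))), |f x.1 - c|) < B := hlocB k
    exact exists_lt_of_ciInf_lt h1
  choose c hc using hchoice
  set c' : ℕ → ℝ := fun j => if hj : j < M then c ⟨j, hj⟩ else 0 with hc'def
  have hpt : ∀ j, ∀ hj : j < M, ∀ x ∈ Icc (a j) (a (j + 1)), |f x - c' j| ≤ B := by
    intro j hj x hx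
    have h1 : c' j = c ⟨j, hj⟩ := dif_pos hj
    have hIsub : Icc (a j) (a (j + 1)) ⊆ Icc 0 1 :=
      Icc_subset_Icc (haIcc j hj.le).1 (haIcc (j + 1) hj).2
    have hbdd : BddAbove (Set.range fun x : (Icc (a j) (a (j + 1))) => |f x.1 - c ⟨j, hj⟩|) := by
      refine ⟨D + |c ⟨j, hj⟩|, ?_⟩
      rintro z ⟨x, rfl⟩
      refine (habs _ _).trans ?_
      have := hD x.1 (hIsub x.2)
      rw [Real.norm_eq_abs] at this
      linarith
    have h2 : |f x - c ⟨j, hj⟩| ≤ ⨆ x : (Icc (a j) (a (j + 1))), |f x.1 - c ⟨j, hj⟩| :=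
      le_ciSup hbdd ⟨x, hx⟩
    rw [h1]
    exact h2.trans (hc ⟨j, hj⟩).le
  -- adjacent constants are close
  have hadj : ∀ j, j + 1 < M → |c' (j + 1) - c' j| ≤ 2 * B := by
    intro j hj
    have hj' : j < M := by omega
    have ht1 : a (j + 1) ∈ Icc (a j) (a (j + 1)) :=
      right_mem_Icc.2 (hamono j hj')
    have ht2 : a (j + 1) ∈ Icc (a (j + 1)) (a (j + 2)) :=
      left_mem_Icc.2 (hamono (j + 1) hj)
    have h1 := hpt j hj' (a (j + 1)) ht1
    have h2 := hpt (j + 1) hj (a (j + 1)) ht2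
    have heq : c' (j + 1) - c' j = (f (a (j + 1)) - c' j) - (f (a (j + 1)) - c' (j + 1)) := by
      ring
    rw [heq]
    refine (habs _ _).trans ?_
    linarith
  have hchain : ∀ i j : ℕ, i ≤ j → j ≤ M - 1 → |c' j - c' i| ≤ 2 * B * ((j:ℝ) - i) := by
    intro i j hij hjM
    induction j, hij using Nat.le_induction with
    | base => simp
    | succ m hm ih =>
      have h1 : |c' (m + 1) - c' i| ≤ |c' (m + 1) - c' m| + |c' m - c' i| := abs_sub_le _ _ _
      have h2 : |c' (m + 1) - c' m| ≤ 2 * B := hadj m (by omega)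
      have h3 : |c' m - c' i| ≤ 2 * B * ((m:ℝ) - i) := ih (by omega)
      calc |c' (m + 1) - c' i| ≤ 2 * B + 2 * B * ((m:ℝ) - i) := by linarith
        _ = 2 * B * (((m:ℕ) + 1 : ℕ) - (i:ℝ)) := by push_cast; ring
  -- the interval assignment
  set g : ℕ → ℕ := fun i => Nat.findGreatest (fun j => a j ≤ u i) (M - 1) with hgdef
  have hgle : ∀ i, g i ≤ M - 1 := fun i => Nat.findGreatest_le _
  have hglt : ∀ i, g i < M := fun i => by have := hgle i; omega
  have hga : ∀ i, a (g i) ≤ u i := by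
    intro i
    exact Nat.findGreatest_spec (P := fun j => a j ≤ u i) (n := M - 1) (Nat.zero_le _)
      (by show a 0 ≤ u i; rw [ha0]; exact (hus i).1)
  have hgu : ∀ i, u i ≤ a (g i + 1) := by
    intro i
    rcases lt_or_ge (g i) (M - 1) with h1 | h1
    · by_contra h2
      push_neg at h2
      exact Nat.findGreatest_is_greatest (P := fun j => a j ≤ u i) (n := M - 1)
        (Nat.lt_succ_self _)
        (by have h1' : Nat.findGreatest (fun j => a j ≤ u i) (M - 1) < M - 1 := h1; omega)
        h2.le
    · have h3 : g i + 1 = M := by have := hgle i; omega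
      rw [h3, haM]
      exact (hus i).2
  have hgmono : Monotone g := by
    intro i i' hii'
    exact Nat.findGreatest_mono (P := fun j => a j ≤ u i) (Q := fun j => a j ≤ u i')
      (fun k hk => hk.trans (hu hii')) le_rfl
  have hmemI : ∀ i, u i ∈ Icc (a (g i)) (a (g i + 1)) := fun i => ⟨hga i, hgu i⟩
  -- the step bound
  have hstep : ∀ i, |f (u (i + 1)) - f (u i)|
      ≤ 2 * B + 2 * B * (((g (i + 1) : ℕ) : ℝ) - ((g i : ℕ) : ℝ)) := by
    intro i
    have h1 : |f (u (i + 1)) - f (u i)|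
        ≤ |f (u (i + 1)) - c' (g (i + 1))| + |c' (g (i + 1)) - f (u i)| := abs_sub_le _ _ _
    have h2 : |c' (g (i + 1)) - f (u i)|
        ≤ |c' (g (i + 1)) - c' (g i)| + |c' (g i) - f (u i)| := abs_sub_le _ _ _
    have h3 : |f (u (i + 1)) - c' (g (i + 1))| ≤ B :=
      hpt (g (i + 1)) (hglt (i + 1)) (u (i + 1)) (hmemI (i + 1))
    have h4 : |c' (g i) - f (u i)| ≤ B := by
      rw [abs_sub_comm]
      exact hpt (g i) (hglt i) (u i) (hmemI i)
    have h5 : |c' (g (i + 1)) - c' (g i)| ≤ 2 * B * (((g (i + 1) : ℕ) : ℝ) - g i) :=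
      hchain (g i) (g (i + 1)) (hgmono (Nat.le_succ i)) (hgle (i + 1))
    linarith
  -- sum the step bounds
  have hsum : ∑ i ∈ Finset.range n, |f (u (i + 1)) - f (u i)|
      ≤ 2 * B * n + 2 * B * (((g n : ℕ) : ℝ) - ((g 0 : ℕ) : ℝ)) := by
    calc ∑ i ∈ Finset.range n, |f (u (i + 1)) - f (u i)|
        ≤ ∑ i ∈ Finset.range n,
          (2 * B + 2 * B * (((g (i + 1) : ℕ) : ℝ) - ((g i : ℕ) : ℝ))) :=
          Finset.sum_le_sum fun i _ => hstep i
      _ = 2 * B * n + 2 * B * (((g n : ℕ) : ℝ) - ((g 0 : ℕ) : ℝ)) := by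
          rw [Finset.sum_add_distrib, Finset.sum_const, Finset.card_range, ← Finset.mul_sum,
            Finset.sum_range_sub (fun i => ((g i : ℕ) : ℝ))]
          rw [nsmul_eq_mul]
          ring
  have hgn : ((g n : ℕ) : ℝ) - ((g 0 : ℕ) : ℝ) ≤ N := by
    have h1 : g n ≤ N := (hgle n).trans (by omega)
    have h2 : ((g n : ℕ) : ℝ) ≤ N := by exact_mod_cast h1
    have h3 : (0:ℝ) ≤ ((g 0 : ℕ) : ℝ) := Nat.cast_nonneg _
    linarith
  have hfinal : ∑ i ∈ Finset.range n, |f (u (i + 1)) - f (u i)|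
      ≤ 6 * C + 6 * C * n / N := by
    have h1 : 2 * B * n + 2 * B * (((g n : ℕ) : ℝ) - ((g 0 : ℕ) : ℝ))
        ≤ 2 * B * n + 2 * B * N := by nlinarith
    have h2 : 2 * B * (N:ℝ) = 6 * C := by
      rw [hBdef]
      have h4 := div_mul_cancel₀ (3 * C) hNne
      linear_combination 2 * h4
    have h3 : 2 * B * (n:ℝ) = 6 * C * n / N := by
      rw [hBdef]
      ring
    calc ∑ i ∈ Finset.range n, |f (u (i + 1)) - f (u i)|
        ≤ 2 * B * n + 2 * B * (((g n : ℕ) : ℝ) - ((g 0 : ℕ) : ℝ)) := hsum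
      _ ≤ 2 * B * n + 2 * B * N := h1
      _ = 6 * C + 6 * C * n / N := by rw [h2, h3]; ring
  have hlast : 6 * C * n / N < ε := by
    have h1 : 6 * C * n / ε < N := (le_max_right _ _).trans_lt hNgt
    rw [div_lt_iff₀ hε] at h1
    rw [div_lt_iff₀ hNR]
    linarith
  linarith

end Stmt4Aux

open Stmt4Aux in
theorem stmt4 (f : ℝ → ℝ) (hf : ContinuousOn f (Set.Icc 0 1)) :
    (BoundedVariationOn f (Set.Icc 0 1) ↔
      ∃ C > (0:ℝ), ∀ N : ℕ, 1 ≤ N → adaptErr f N ≤ C / N) ∧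
    (BoundedVariationOn f (Set.Icc 0 1) →
      ∀ N : ℕ, 1 ≤ N →
        adaptErr f N ≤ ((1 / 2) * (eVariationOn f (Set.Icc 0 1)).toReal) / N) ∧
    (∀ C : ℝ, 0 < C → (∀ N : ℕ, 1 ≤ N → adaptErr f N ≤ C / N) →
      eVariationOn f (Set.Icc 0 1) ≤ ENNReal.ofReal (6 * C)) := by
  refine ⟨⟨?_, ?_⟩, fun hbv N hN => part2 hf hbv N hN, fun C hC hA => part3 hf C hC hA⟩
  · intro hbv
    refine ⟨(1 / 2) * (eVariationOn f (Set.Icc 0 1)).toReal + 1, ?_, fun N hN => ?_⟩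
    · have := ENNReal.toReal_nonneg (a := eVariationOn f (Set.Icc 0 1))
      linarith
    · have h2 := part2 hf hbv N hN
      have hNpos : (0:ℝ) < N := by exact_mod_cast hN
      exact h2.trans ((div_le_div_iff_of_pos_right hNpos).2 (by linarith))
  · rintro ⟨C, hC, hA⟩
    exact ne_top_of_le_ne_top ENNReal.ofReal_ne_top (part3 hf C hC hA)
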